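/- Let (W,S) be a finite Coxeter system of rank m and r ∈ {−1,…,m}. The dual code of the order-r Coxeter code equals the order-(m−r−1) Coxeter code: C_W(r)^⊥ = C_W(m−r−1), where the dual is taken with respect to the standard bilinear form on F₂^W. -/

import Mathlib

open Pointwise

/-- The order-`r` Coxeter code of type `(W,S)`: the `F₂`-span of the indicator
functions of standard cosets `σ⟨J⟩` of rank `m - r` (`m` the rank of the system). -/
noncomputable def coxeterCode {B W : Type*} [Fintype B] [Group W] [Fintype W]
    {M : CoxeterMatrix B} (cs : CoxeterSystem M W) (r : ℤ) :
    Submodule (ZMod 2) (W → ZMod 2) :=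
  Submodule.span (ZMod 2)
    {f | ∃ (σ : W) (J : Finset B), (J.card : ℤ) = (Fintype.card B : ℤ) - r ∧
      f = Set.indicator (σ • (Subgroup.closure (cs.simple '' ↑J) : Set W)) (fun _ => 1)}


open List

namespace CoxeterSystem

variable {B : Type*} {W : Type*} [Group W] {M : CoxeterMatrix B} (cs : CoxeterSystem M W)

local prefix:100 "σ" => cs.simple
local prefix:100 "π" => cs.wordProd
local prefix:100 "ℓ" => cs.length

private theorem two_eq_zero : (2 : ZMod 2) = 0 := rfl

private theorem conj_simple_eq_simple_iff (i : B) (t : W) :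
    σ i * t * σ i = σ i ↔ t = σ i := by
  constructor
  · intro h
    have := congrArg (fun x => σ i * x * σ i) h
    simpa [mul_assoc, cs.simple_mul_simple_cancel_left,
      cs.simple_mul_simple_cancel_right] using this
  · rintro rfl; simp [cs.simple_mul_simple_cancel_right, cs.simple_mul_simple_self]

open Classical in
/-- The permutation of `W × ZMod 2` associated to a simple reflection. -/
noncomputable def etaPerm (i : B) : Equiv.Perm (W × ZMod 2) where
  toFun p := (σ i * p.1 * σ i, p.2 + if p.1 = σ i then 1 else 0)
  invFun p := (σ i * p.1 * σ i, p.2 + if p.1 = σ i then 1 else 0)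
  left_inv p := by
    obtain ⟨t, e⟩ := p
    simp only [Prod.mk.injEq]
    refine ⟨by simp [mul_assoc, cs.simple_mul_simple_cancel_left,
      cs.simple_mul_simple_cancel_right], ?_⟩
    by_cases h : t = σ i
    · simp [h, (cs.conj_simple_eq_simple_iff i t).mpr h, add_assoc, ← two_mul, two_eq_zero]
    · have h2 : ¬ (σ i * t * σ i = σ i) := fun hc => h ((cs.conj_simple_eq_simple_iff i t).mp hc)
      simp [h, h2]
  right_inv p := by
    obtain ⟨t, e⟩ := p
    simp only [Prod.mk.injEq]
    refine ⟨by simp [mul_assoc, cs.simple_mul_simple_cancel_left,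
      cs.simple_mul_simple_cancel_right], ?_⟩
    by_cases h : t = σ i
    · simp [h, (cs.conj_simple_eq_simple_iff i t).mpr h, add_assoc, ← two_mul, two_eq_zero]
    · have h2 : ¬ (σ i * t * σ i = σ i) := fun hc => h ((cs.conj_simple_eq_simple_iff i t).mp hc)
      simp [h, h2]

open Classical in
theorem etaPerm_apply (i : B) (t : W) (e : ZMod 2) :
    cs.etaPerm i (t, e) = (σ i * t * σ i, e + if t = σ i then 1 else 0) := rfl

open Classical in
theorem prod_map_etaPerm_apply (ω : List B) (t : W) (e : ZMod 2) :
    ((ω.map cs.etaPerm).prod) (t, e)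
      = (π ω * t * (π ω)⁻¹, e + ((cs.rightInvSeq ω).count t : ZMod 2)) := by
  induction ω generalizing t e with
  | nil => simp [rightInvSeq]
  | cons i ω ih =>
      rw [map_cons, prod_cons, Equiv.Perm.mul_apply, ih, etaPerm_apply]
      have hris : cs.rightInvSeq (i :: ω) = ((π ω)⁻¹ * σ i * π ω) :: cs.rightInvSeq ω := rfl
      rw [hris, count_cons]
      have hcond : (π ω * t * (π ω)⁻¹ = σ i) ↔ ((π ω)⁻¹ * σ i * π ω = t) := by
        constructor
        · intro h; rw [← h]; group
        · intro h; rw [← h]; group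
      simp only [Prod.mk.injEq]
      refine ⟨by simp [cs.wordProd_cons, mul_inv_rev, cs.inv_simple, mul_assoc], ?_⟩
      push_cast
      by_cases h : (π ω)⁻¹ * σ i * π ω = t
      · simp only [h, hcond.mpr h, if_pos, beq_self_eq_true, if_true]
        push_cast
        ring
      · have h2 : ¬ (π ω * t * (π ω)⁻¹ = σ i) := fun hc => h (hcond.mp hc)
        simp [h, h2]


theorem drop_alternatingWord (i i' : B) (k n : ℕ) :
    (alternatingWord i i' n).drop k = alternatingWord i i' (n - k) := by
  induction k generalizing n with
  | zero => simp
  | succ k ih =>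
      cases n with
      | zero => simp [alternatingWord]
      | succ n =>
          rw [alternatingWord_succ' i i' n, drop_succ_cons, ih n]
          congr 1
          omega

theorem get?_alternatingWord (i i' : B) (k n : ℕ) (h : k < n) :
    (alternatingWord i i' n)[k]? = some (if Even (n - k - 1) then i' else i) := by
  have h1 : (alternatingWord i i' n)[k]? = ((alternatingWord i i' n).drop k)[0]? := by
    simp [getElem?_drop]
  rw [h1, drop_alternatingWord]
  have h2 : n - k = (n - k - 1) + 1 := by omega
  rw [h2, alternatingWord_succ']
  rfl

private theorem simple_conj_pow_inv (i i' : B) (a : ℕ) :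
    σ i' * (σ i * σ i') ^ a * σ i' = ((σ i * σ i') ^ a)⁻¹ := by
  have h0 : σ i' * (σ i * σ i') * (σ i')⁻¹ = (σ i * σ i')⁻¹ := by
    rw [cs.inv_simple, mul_inv_rev, cs.inv_simple, cs.inv_simple]
    simp [mul_assoc, cs.simple_mul_simple_cancel_left, cs.simple_mul_simple_cancel_right]
  calc σ i' * (σ i * σ i') ^ a * σ i'
      = σ i' * (σ i * σ i') ^ a * (σ i')⁻¹ := by rw [cs.inv_simple]
    _ = (σ i' * (σ i * σ i') * (σ i')⁻¹) ^ a := by rw [conj_pow]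
    _ = ((σ i * σ i')⁻¹) ^ a := by rw [h0]
    _ = ((σ i * σ i') ^ a)⁻¹ := inv_pow _ _

theorem alt_inv_mul_succ (i i' : B) (q : ℕ) :
    (π (alternatingWord i i' q))⁻¹ * π (alternatingWord i i' (q + 1))
      = σ i' * (σ i * σ i') ^ q := by
  set p := σ i * σ i' with hp
  rcases Nat.even_or_odd q with hq | hq
  · obtain ⟨a, rfl⟩ := hq
    rw [cs.prod_alternatingWord_eq_mul_pow, cs.prod_alternatingWord_eq_mul_pow]
    have e1 : Even (a + a) := ⟨a, rfl⟩
    have e2 : ¬ Even (a + a + 1) := by simp [Nat.even_add_one, e1]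
    rw [if_pos e1, if_neg e2]
    have d1 : (a + a) / 2 = a := by omega
    have d2 : (a + a + 1) / 2 = a := by omega
    rw [d1, d2, one_mul, ← hp]
    have key : (p ^ a)⁻¹ = σ i' * p ^ a * σ i' := (cs.simple_conj_pow_inv i i' a).symm
    rw [key]
    simp only [mul_assoc, cs.simple_mul_simple_cancel_left]
    rw [← pow_add]
  · obtain ⟨a, rfl⟩ := hq
    rw [cs.prod_alternatingWord_eq_mul_pow, cs.prod_alternatingWord_eq_mul_pow]
    have e1 : ¬ Even (2 * a + 1) := by simp [Nat.even_add_one, parity_simps]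
    have e2 : Even (2 * a + 1 + 1) := by simpa [Nat.even_add_one] using e1
    rw [if_neg e1, if_pos e2]
    have d1 : (2 * a + 1) / 2 = a := by omega
    have d2 : (2 * a + 1 + 1) / 2 = a + 1 := by omega
    rw [d1, d2, one_mul, ← hp, mul_inv_rev, cs.inv_simple]
    have key : (p ^ a)⁻¹ = σ i' * p ^ a * σ i' := (cs.simple_conj_pow_inv i i' a).symm
    rw [key]
    simp only [mul_assoc, cs.simple_mul_simple_cancel_left]
    rw [← pow_add]
    have harith : a + (a + 1) = 2 * a + 1 := by omega
    rw [harith]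

theorem getD_rightInvSeq_alternatingWord (i i' : B) (m k : ℕ) (hk : k < 2 * m) :
    (cs.rightInvSeq (alternatingWord i i' (2 * m))).getD k 1
      = σ i' * (σ i * σ i') ^ (2 * m - 1 - k) := by
  rw [cs.getD_rightInvSeq, drop_alternatingWord,
    get?_alternatingWord i i' k (2 * m) hk]
  have h2 : 2 * m - (k + 1) = 2 * m - k - 1 := by omega
  rw [h2]
  set q := 2 * m - k - 1 with hq
  have hopt : (Option.map cs.simple (some (if Even q then i' else i))).getD 1
      = (if Even q then σ i' else σ i) := by
    by_cases h : Even q <;> simp [h]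
  rw [hopt]
  have hsucc : (if Even q then σ i' else σ i) * π (alternatingWord i i' q)
      = π (alternatingWord i i' (q + 1)) := by
    rw [alternatingWord_succ', cs.wordProd_cons, apply_ite cs.simple]
  have hfin : 2 * m - 1 - k = q := by omega
  rw [hfin, ← cs.alt_inv_mul_succ i i' q, ← hsucc]
  group

theorem etaPerm_isLiftable : M.IsLiftable cs.etaPerm := by
  classical
  intro i i'
  set m := M i i' with hm
  have hpow : ∀ n : ℕ, (cs.etaPerm i * cs.etaPerm i') ^ n
      = ((alternatingWord i i' (2 * n)).map cs.etaPerm).prod := by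
    intro n
    induction n with
    | zero => simp [alternatingWord]
    | succ n ih =>
        have h1 : 2 * (n + 1) = (2 * n + 1) + 1 := by ring
        rw [h1, alternatingWord_succ' i i' (2 * n + 1), alternatingWord_succ' i i' (2 * n)]
        have e1 : ¬ Even (2 * n + 1) := by simp [Nat.even_add_one, parity_simps]
        have e2 : Even (2 * n) := ⟨n, by ring⟩
        rw [if_neg e1, if_pos e2]
        rw [map_cons, map_cons, prod_cons, prod_cons, ← ih, pow_succ']
        rw [← mul_assoc]
  rw [hpow m]
  apply Equiv.ext
  rintro ⟨t, e⟩
  rw [cs.prod_map_etaPerm_apply]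
  have hprod : π (alternatingWord i i' (2 * m)) = 1 := by
    rw [cs.prod_alternatingWord_eq_mul_pow]
    have e2 : Even (2 * m) := ⟨m, by ring⟩
    rw [if_pos e2, one_mul]
    have h3 : 2 * m / 2 = m := by omega
    rw [h3, hm]
    exact cs.simple_mul_simple_pow i i'
  have hcount : ∃ c, (cs.rightInvSeq (alternatingWord i i' (2 * m))).count t = c + c := by
    set l := cs.rightInvSeq (alternatingWord i i' (2 * m)) with hl
    have hlen : l.length = 2 * m := by
      rw [hl, cs.length_rightInvSeq, length_alternatingWord]
    have htd : l.take m = l.drop m := by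
      apply List.ext_getElem
      · rw [length_take, length_drop, hlen]; omega
      · intro k h1 h2
        rw [length_take, hlen] at h1
        have hk : k < m := by omega
        rw [getElem_take, getElem_drop]
        rw [← List.getD_eq_getElem l 1, ← List.getD_eq_getElem l 1]
        rw [hl, cs.getD_rightInvSeq_alternatingWord i i' m k (by omega),
          cs.getD_rightInvSeq_alternatingWord i i' m (m + k) (by omega)]
        have hper : (σ i * σ i') ^ (2 * m - 1 - k) = (σ i * σ i') ^ (2 * m - 1 - (m + k)) := by
          have h3 : 2 * m - 1 - k = (2 * m - 1 - (m + k)) + m := by omega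
          rw [h3, pow_add, hm, cs.simple_mul_simple_pow i i', mul_one]
        rw [hper]
    refine ⟨(l.take m).count t, ?_⟩
    conv_lhs => rw [(take_append_drop m l).symm]
    rw [count_append, ← htd]
  obtain ⟨c, hc⟩ := hcount
  rw [Equiv.Perm.one_apply, hprod, hc]
  have hz : ((c + c : ℕ) : ZMod 2) = 0 := by
    push_cast
    rw [← two_mul, show ((2 : ZMod 2)) = 0 from rfl, zero_mul]
  rw [hz, add_zero]
  simp only [one_mul, inv_one, mul_one]



open Classical in
/-- The homomorphism from `W` to permutations of `W × ZMod 2`. -/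
noncomputable def etaHom : W →* Equiv.Perm (W × ZMod 2) :=
  cs.lift ⟨cs.etaPerm, cs.etaPerm_isLiftable⟩

theorem etaHom_simple (i : B) : cs.etaHom (σ i) = cs.etaPerm i :=
  cs.lift_apply_simple cs.etaPerm_isLiftable i

/-- The parity of the number of occurrences of `t` in inversion sequences of `w`. -/
noncomputable def eta (w t : W) : ZMod 2 := ((cs.etaHom w) (t, 0)).2

theorem etaHom_wordProd (ω : List B) :
    cs.etaHom (π ω) = (ω.map cs.etaPerm).prod := by
  induction ω with
  | nil => rw [cs.wordProd_nil, map_one, map_nil, prod_nil]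
  | cons i ω ih => rw [cs.wordProd_cons, map_mul, cs.etaHom_simple, map_cons, prod_cons, ih]

open Classical in
theorem eta_wordProd (ω : List B) (t : W) :
    cs.eta (π ω) t = ((cs.rightInvSeq ω).count t : ZMod 2) := by
  unfold eta
  rw [cs.etaHom_wordProd, cs.prod_map_etaPerm_apply, zero_add]

theorem etaHom_apply (w t : W) (e : ZMod 2) :
    cs.etaHom w (t, e) = (w * t * w⁻¹, e + cs.eta w t) := by
  classical
  obtain ⟨ω, rfl⟩ := cs.wordProd_surjective w
  rw [cs.etaHom_wordProd, cs.prod_map_etaPerm_apply, cs.eta_wordProd]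

theorem eta_mul (u v t : W) :
    cs.eta (u * v) t = cs.eta v t + cs.eta u (v * t * v⁻¹) := by
  have h : cs.etaHom (u * v) (t, 0) = (u * v * t * (u * v)⁻¹, cs.eta v t + cs.eta u (v * t * v⁻¹)) := by
    rw [map_mul, Equiv.Perm.mul_apply, cs.etaHom_apply v t 0, zero_add]
    rw [show ((v * t * v⁻¹, cs.eta v t) : W × ZMod 2) = (v * t * v⁻¹, cs.eta v t) from rfl]
    rw [cs.etaHom_apply u (v * t * v⁻¹) (cs.eta v t)]
    have : u * (v * t * v⁻¹) * u⁻¹ = u * v * t * (u * v)⁻¹ := by group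
    rw [this]
  have h2 := congrArg Prod.snd h
  simpa [eta] using h2

open Classical in
theorem eta_simple (i : B) (t : W) :
    cs.eta (σ i) t = if t = σ i then 1 else 0 := by
  unfold eta
  rw [cs.etaHom_simple, cs.etaPerm_apply, zero_add]

private theorem zmod2_add_cancel {a b : ZMod 2} (h : a + b = 0) : a = b := by
  have hb : b + b = 0 := by
    have : ∀ x : ZMod 2, x + x = 0 := by decide
    exact this b
  calc a = a + (b + b) := by rw [hb, add_zero]
    _ = (a + b) + b := by ring
    _ = b := by rw [h, zero_add]

theorem eta_inv (u t : W) : cs.eta u⁻¹ t = cs.eta u (u⁻¹ * t * u) := by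
  have h1 : cs.etaHom u (cs.etaHom u⁻¹ (t, 0)) = (t, 0) := by
    rw [← Equiv.Perm.mul_apply, ← map_mul, mul_inv_cancel, map_one, Equiv.Perm.one_apply]
  rw [cs.etaHom_apply u⁻¹ t 0, zero_add, inv_inv] at h1
  rw [cs.etaHom_apply u (u⁻¹ * t * u) (cs.eta u⁻¹ t)] at h1
  have h2 := congrArg Prod.snd h1
  simp only at h2
  exact (zmod2_add_cancel (by rw [add_comm] at h2; exact h2)).symm

theorem eta_reflection_self {t : W} (ht : cs.IsReflection t) : cs.eta t t = 1 := by
  obtain ⟨w, i, rfl⟩ := ht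
  set t := w * σ i * w⁻¹ with hts
  have hconj : w⁻¹ * t * w = σ i := by
    rw [hts]; group
  have h1 : cs.eta (w * (σ i * w⁻¹)) t = cs.eta (σ i * w⁻¹) t
      + cs.eta w ((σ i * w⁻¹) * t * (σ i * w⁻¹)⁻¹) := cs.eta_mul w (σ i * w⁻¹) t
  have hinner : (σ i * w⁻¹) * t * (σ i * w⁻¹)⁻¹ = σ i := by
    rw [mul_inv_rev, inv_inv, cs.inv_simple, hts]
    simp only [mul_assoc, inv_mul_cancel_left]
    rw [cs.simple_mul_simple_cancel_left]
  have h2 : cs.eta (σ i * w⁻¹) t = cs.eta w⁻¹ t + cs.eta (σ i) (w⁻¹ * t * (w⁻¹)⁻¹) :=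
    cs.eta_mul (σ i) w⁻¹ t
  have h3 : cs.eta (σ i) (w⁻¹ * t * (w⁻¹)⁻¹) = 1 := by
    rw [inv_inv, hconj, cs.eta_simple]
    simp
  have h4 : cs.eta w⁻¹ t = cs.eta w (σ i) := by rw [cs.eta_inv, hconj]
  have h5 : w * (σ i * w⁻¹) = t := by rw [hts, mul_assoc]
  rw [h5] at h1
  rw [h1, h2, h3, h4, hinner]
  have : ∀ x : ZMod 2, x + 1 + x = 1 := by decide
  exact this _

open Classical in
theorem count_ris_eq_one_of {ω : List B} {t : W} (h : (↑((cs.rightInvSeq ω).count t) : ZMod 2) = 1) :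
    t ∈ cs.rightInvSeq ω := by
  by_contra hmem
  rw [List.count_eq_zero_of_not_mem hmem] at h
  simp at h

/-- Strong exchange property. -/
theorem strongExchange {ω : List B} (hω : cs.IsReduced ω) {t : W} (ht : cs.IsReflection t)
    (hlt : ℓ (π ω * t) < ℓ (π ω)) : ∃ j < ω.length, π ω * t = π (ω.eraseIdx j) := by
  classical
  have hzm : ∀ x : ZMod 2, x ≠ 1 → x = 0 := by decide
  have heta : cs.eta (π ω) t = 1 := by
    by_contra h0
    have h0' : cs.eta (π ω) t = 0 := hzm _ h0
    set v := π ω * t with hv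
    have hvt : v * t = π ω := by rw [hv, mul_assoc, ht.mul_self, mul_one]
    have hveta : cs.eta v t = 1 := by
      have hmm : cs.eta (v * t) t = cs.eta t t + cs.eta v (t * t * t⁻¹) := cs.eta_mul v t t
      rw [hvt, ht.inv] at hmm
      rw [show t * t * t = t by rw [ht.mul_self, one_mul]] at hmm
      rw [h0', cs.eta_reflection_self ht] at hmm
      exact (zmod2_add_cancel hmm.symm).symm
    obtain ⟨ω', hred', hv'⟩ := cs.exists_reduced_word' v
    rw [hv'] at hveta
    rw [cs.eta_wordProd] at hveta
    have hmem : t ∈ cs.rightInvSeq ω' := cs.count_ris_eq_one_of hveta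
    obtain ⟨j, hj, hget⟩ := List.getElem_of_mem hmem
    rw [cs.length_rightInvSeq] at hj
    have hgetD : (cs.rightInvSeq ω').getD j 1 = t := by
      rw [List.getD_eq_getElem _ _ (by rw [cs.length_rightInvSeq]; exact hj)]
      exact hget
    have he : v * t = π (ω'.eraseIdx j) := by
      rw [hv', ← hgetD]
      exact cs.wordProd_mul_getD_rightInvSeq ω' j
    have hlen : ℓ (v * t) ≤ ω'.length - 1 := by
      rw [he]
      calc ℓ (π (ω'.eraseIdx j)) ≤ (ω'.eraseIdx j).length := cs.length_wordProd_le _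
        _ ≤ ω'.length - 1 := by rw [List.length_eraseIdx]; simp [hj]
    rw [hvt] at hlen
    have hvlen : ℓ v = ω'.length := by rw [hv']; exact hred'
    omega
  rw [cs.eta_wordProd] at heta
  have hmem : t ∈ cs.rightInvSeq ω := cs.count_ris_eq_one_of heta
  obtain ⟨j, hj, hget⟩ := List.getElem_of_mem hmem
  rw [cs.length_rightInvSeq] at hj
  have hgetD : (cs.rightInvSeq ω).getD j 1 = t := by
    rw [List.getD_eq_getElem _ _ (by rw [cs.length_rightInvSeq]; exact hj)]
    exact hget
  exact ⟨j, hj, by rw [← hgetD]; exact cs.wordProd_mul_getD_rightInvSeq ω j⟩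


/-! ### Words with letters in a subset, parabolic subgroups -/

theorem isReduced_nil : cs.IsReduced ([] : List B) := by
  simp [IsReduced]

theorem exists_reduced_sublist (ω : List B) :
    ∃ ω' : List B, cs.IsReduced ω' ∧ π ω' = π ω ∧ ∀ i ∈ ω', i ∈ ω := by
  generalize hn : ω.length = n
  induction n using Nat.strong_induction_on generalizing ω with
  | _ n ih =>
  by_cases hred : cs.IsReduced ω
  · exact ⟨ω, hred, rfl, fun i h => h⟩
  · have hlen0 : ω ≠ [] := by rintro rfl; exact hred cs.isReduced_nil
    have hlenpos : 0 < ω.length := List.length_pos_iff.mpr hlen0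
    have hP : ∃ j, ¬ cs.IsReduced (ω.take (j+1)) := by
      refine ⟨ω.length - 1, ?_⟩
      have h1 : ω.length - 1 + 1 = ω.length := by omega
      rw [h1, List.take_length]
      exact hred
    classical
    set j := Nat.find hP with hj
    have hspec : ¬ cs.IsReduced (ω.take (j+1)) := Nat.find_spec hP
    have hjlt : j < ω.length := by
      have : j ≤ ω.length - 1 := Nat.find_min' hP (by
        have h1 : ω.length - 1 + 1 = ω.length := by omega
        rw [h1, List.take_length]; exact hred)
      omega
    have hredj : cs.IsReduced (ω.take j) := by
      rcases Nat.eq_zero_or_pos j with h0 | h0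
      · rw [h0]; simpa using cs.isReduced_nil
      · have := Nat.find_min hP (show j - 1 < j by omega)
        rw [show j - 1 + 1 = j by omega] at this
        exact not_not.mp this
    have htake : ω.take (j+1) = ω.take j ++ [ω[j]] := by
      rw [List.take_succ, List.getElem?_eq_getElem hjlt]
      rfl
    set i := ω[j] with hi
    set y := π (ω.take j) with hy
    have hylen : ℓ y = j := by
      have := hredj
      rwa [IsReduced, List.length_take, min_eq_left (by omega : j ≤ ω.length)] at this
    have hbad : ℓ (y * σ i) ≠ j + 1 := by
      intro hc
      apply hspec
      rw [IsReduced, htake, cs.wordProd_append, cs.wordProd_singleton, List.length_append,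
        List.length_take, min_eq_left (by omega : j ≤ ω.length)]
      simpa using hc
    have hdown : ℓ (y * σ i) < ℓ y := by
      rcases cs.length_mul_simple y i with h | h
      · exact absurd (by rw [h, hylen]) hbad
      · omega
    obtain ⟨k, hk, he⟩ := cs.strongExchange hredj (cs.isReflection_simple i) hdown
    have hkj : k < j := by
      rw [List.length_take, min_eq_left (by omega : j ≤ ω.length)] at hk; exact hk
    set ω₂ := (ω.take j).eraseIdx k ++ ω.drop (j+1) with hω₂
    have hπ : π ω₂ = π ω := by
      rw [hω₂, cs.wordProd_append, ← he]
      conv_rhs => rw [← List.take_append_drop (j+1) ω]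
      rw [cs.wordProd_append, htake, cs.wordProd_append, cs.wordProd_singleton]
    have hlen₂ : ω₂.length < n := by
      rw [hω₂, List.length_append, List.length_eraseIdx, if_pos hk, List.length_take,
        List.length_drop, min_eq_left (by omega : j ≤ ω.length)]
      omega
    obtain ⟨ω', h1, h2, h3⟩ := ih ω₂.length hlen₂ ω₂ rfl
    refine ⟨ω', h1, by rw [h2, hπ], fun a ha => ?_⟩
    have ha2 := h3 a ha
    rw [hω₂, List.mem_append] at ha2
    rcases ha2 with h | h
    · exact (List.take_sublist j ω).mem ((List.eraseIdx_sublist (ω.take j) k).mem h)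
    · exact (List.drop_sublist (j+1) ω).mem h

theorem wordProd_mem_closure {X : Set B} {ω : List B} (h : ∀ i ∈ ω, i ∈ X) :
    π ω ∈ Subgroup.closure (cs.simple '' X) := by
  induction ω with
  | nil => rw [cs.wordProd_nil]; exact one_mem _
  | cons i ω ih =>
      rw [cs.wordProd_cons]
      exact mul_mem (Subgroup.subset_closure ⟨i, h i List.mem_cons_self, rfl⟩)
        (ih fun a ha => h a (List.mem_cons_of_mem i ha))

theorem exists_word_subset_of_mem_closure {X : Set B} {u : W}
    (h : u ∈ Subgroup.closure (cs.simple '' X)) :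
    ∃ ω : List B, (∀ i ∈ ω, i ∈ X) ∧ u = π ω := by
  induction h using Subgroup.closure_induction with
  | mem x hx =>
      obtain ⟨i, hi, rfl⟩ := hx
      exact ⟨[i], by simpa using hi, (cs.wordProd_singleton i).symm⟩
  | one => exact ⟨[], by simp, (cs.wordProd_nil).symm⟩
  | mul x y hx hy ihx ihy =>
      obtain ⟨ω₁, hω₁, rfl⟩ := ihx
      obtain ⟨ω₂, hω₂, rfl⟩ := ihy
      refine ⟨ω₁ ++ ω₂, ?_, (cs.wordProd_append ω₁ ω₂).symm⟩
      intro a ha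
      rcases List.mem_append.mp ha with h | h
      · exact hω₁ a h
      · exact hω₂ a h
  | inv x hx ihx =>
      obtain ⟨ω, hω, rfl⟩ := ihx
      exact ⟨ω.reverse, fun a ha => hω a (List.mem_reverse.mp ha),
        (cs.wordProd_reverse ω).symm⟩

theorem exists_reduced_word_subset_of_mem_closure {X : Set B} {u : W}
    (h : u ∈ Subgroup.closure (cs.simple '' X)) :
    ∃ ω : List B, cs.IsReduced ω ∧ (∀ i ∈ ω, i ∈ X) ∧ u = π ω := by
  obtain ⟨ω, hω, rfl⟩ := cs.exists_word_subset_of_mem_closure h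
  obtain ⟨ω', h1, h2, h3⟩ := cs.exists_reduced_sublist ω
  exact ⟨ω', h1, fun a ha => hω a (h3 a ha), h2.symm⟩

theorem peel_right {X : Set B} {u : W} (hu : u ∈ Subgroup.closure (cs.simple '' X))
    (hne : u ≠ 1) :
    ∃ i ∈ X, ∃ u', u' ∈ Subgroup.closure (cs.simple '' X) ∧ u = u' * σ i ∧ ℓ u' + 1 = ℓ u := by
  obtain ⟨ω, hred, hX, rfl⟩ := cs.exists_reduced_word_subset_of_mem_closure hu
  have hne' : ω ≠ [] := by rintro rfl; exact hne (cs.wordProd_nil)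
  refine ⟨ω.getLast hne', hX _ (List.getLast_mem hne'), π ω.dropLast, ?_, ?_, ?_⟩
  · apply cs.wordProd_mem_closure
    intro a ha
    exact hX a ((List.dropLast_sublist ω).mem ha)
  · conv_lhs => rw [← List.dropLast_append_getLast hne']
    rw [cs.wordProd_append, cs.wordProd_singleton]
  · have hd : cs.IsReduced ω.dropLast := by
      rw [List.dropLast_eq_take]
      exact hred.take _
    have h5 : ℓ (π ω.dropLast) = ω.dropLast.length := hd
    have h6 : ℓ (π ω) = ω.length := hred
    have h7 : 0 < ω.length := List.length_pos_iff.mpr hne'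
    rw [h5, h6, List.length_dropLast]
    omega

/-- If `x` has minimal length in its coset `x⟨X⟩`, lengths add. -/
theorem length_mul_of_min {X : Set B} {x : W}
    (hmin : ∀ v ∈ Subgroup.closure (cs.simple '' X), ℓ x ≤ ℓ (x * v)) :
    ∀ u ∈ Subgroup.closure (cs.simple '' X), ℓ (x * u) = ℓ x + ℓ u := by
  intro u hu
  generalize hn : ℓ u = n
  induction n using Nat.strong_induction_on generalizing u with
  | _ n ih =>
  by_cases h1 : u = 1
  · subst h1; rw [cs.length_one] at hn; simp [← hn]
  · obtain ⟨i, hiX, u', hu', hform, hlen'⟩ := cs.peel_right hu h1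
    have ihu' : ℓ (x * u') = ℓ x + ℓ u' := ih (ℓ u') (by omega) u' hu' rfl
    rcases cs.length_mul_simple (x * u') i with hup | hdown
    · rw [hform, ← mul_assoc, hup, ihu']
      omega
    · exfalso
      obtain ⟨α, hαred, hαw⟩ := cs.exists_reduced_word' x
      obtain ⟨β, hβred, hβX, hβw⟩ := cs.exists_reduced_word_subset_of_mem_closure hu'
      have hπαβ : π (α ++ β) = x * u' := by
        rw [cs.wordProd_append, ← hαw, ← hβw]
      have hαβred : cs.IsReduced (α ++ β) := by
        have hx1 : ℓ x = α.length := by rw [hαw]; exact hαred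
        have hx2 : ℓ u' = β.length := by rw [hβw]; exact hβred
        rw [IsReduced, hπαβ, List.length_append, ihu']
        omega
      have hlt : ℓ (π (α ++ β) * σ i) < ℓ (π (α ++ β)) := by
        rw [hπαβ]; omega
      obtain ⟨k, hk, he⟩ := cs.strongExchange hαβred (cs.isReflection_simple i) hlt
      rw [hπαβ] at he
      by_cases hcase : k < α.length
      · rw [List.eraseIdx_append_of_lt_length hcase] at he
        rw [cs.wordProd_append, ← hβw] at he
        have he2 : x * (u' * σ i * u'⁻¹) = π (α.eraseIdx k) := by
          have : x * u' * σ i * u'⁻¹ = π (α.eraseIdx k) * u' * u'⁻¹ := by rw [he]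
          simpa [mul_assoc] using this
        have hv : u' * σ i * u'⁻¹ ∈ Subgroup.closure (cs.simple '' X) :=
          mul_mem (mul_mem hu' (Subgroup.subset_closure ⟨i, hiX, rfl⟩)) (inv_mem hu')
        have hge := hmin _ hv
        rw [he2] at hge
        have hle : ℓ (π (α.eraseIdx k)) ≤ α.length - 1 := by
          calc ℓ (π (α.eraseIdx k)) ≤ (α.eraseIdx k).length := cs.length_wordProd_le _
            _ ≤ α.length - 1 := by rw [List.length_eraseIdx, if_pos hcase]
        have hxlen : ℓ x = α.length := by rw [hαw]; exact hαred
        omega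
      · push_neg at hcase
        rw [List.eraseIdx_append_of_length_le hcase] at he
        rw [cs.wordProd_append, ← hαw] at he
        have he2 : u' * σ i = π (β.eraseIdx (k - α.length)) := by
          have : x * (u' * σ i) = x * π (β.eraseIdx (k - α.length)) := by
            rw [← mul_assoc]; exact he
          exact mul_left_cancel this
        have hkβ : k - α.length < β.length := by
          rw [List.length_append] at hk; omega
        have hle : ℓ (u' * σ i) ≤ β.length - 1 := by
          calc ℓ (u' * σ i) ≤ (β.eraseIdx (k - α.length)).length := by
                rw [he2]; exact cs.length_wordProd_le _
            _ ≤ β.length - 1 := by rw [List.length_eraseIdx, if_pos hkβ]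
        have hl1 : ℓ (u' * σ i) = ℓ u := by rw [← hform]
        have hβlen : ℓ u' = β.length := by rw [hβw]; exact hβred
        omega

/-- If `w` has no right descents in `X`, then lengths add over `w⟨X⟩`. -/
theorem length_mul_of_noDescent {X : Set B} {w : W}
    (hw : ∀ i ∈ X, ¬ cs.IsRightDescent w i) :
    ∀ u ∈ Subgroup.closure (cs.simple '' X), ℓ (w * u) = ℓ w + ℓ u := by
  classical
  set P := Subgroup.closure (cs.simple '' X) with hP
  have hex : ∃ n, ∃ u ∈ P, ℓ (w * u) = n := ⟨ℓ w, 1, one_mem _, by rw [mul_one]⟩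
  set n₀ := Nat.find hex with hn₀
  obtain ⟨u₀, hu₀P, hu₀len⟩ := Nat.find_spec hex
  have hminP : ∀ u ∈ P, n₀ ≤ ℓ (w * u) := fun u hu => Nat.find_min' hex ⟨u, hu, rfl⟩
  set x := w * u₀ with hx
  have hxmin : ∀ v ∈ P, ℓ x ≤ ℓ (x * v) := by
    intro v hv
    rw [hx, mul_assoc, hu₀len]
    exact hminP _ (mul_mem hu₀P hv)
  have hall := cs.length_mul_of_min hxmin
  have hu₀1 : u₀ = 1 := by
    by_contra hne
    have hinv : u₀⁻¹ ∈ P := inv_mem hu₀P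
    have hinvne : u₀⁻¹ ≠ 1 := by simpa using hne
    obtain ⟨i, hiX, u'', hu'', hform, hlen''⟩ := cs.peel_right hinv hinvne
    have hw1 : w = x * u₀⁻¹ := by rw [hx, mul_assoc, mul_inv_cancel, mul_one]
    have h8 : u'' = u₀⁻¹ * σ i := by
      rw [hform, mul_assoc, cs.simple_mul_simple_self, mul_one]
    have hw2 : w * σ i = x * u'' := by
      rw [h8, hx]; simp [mul_assoc]
    have e1 : ℓ w = ℓ x + ℓ u₀⁻¹ := by rw [hw1]; exact hall _ hinv
    have e2 : ℓ (w * σ i) = ℓ x + ℓ u'' := by rw [hw2]; exact hall _ hu''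
    have : cs.IsRightDescent w i := by
      rw [IsRightDescent]; omega
    exact hw i hiX this
  intro u hu
  have h9 := hall u hu
  rw [hx, hu₀1, mul_one] at h9
  exact h9

section Finite
variable [Fintype W]

/-- Existence of the longest element, with the length-subtraction property. -/
theorem exists_longest : ∃ w₀ : W, ∀ u : W, ℓ (w₀ * u) + ℓ u = ℓ w₀ := by
  obtain ⟨w₀, _, hmax⟩ := Finset.exists_max_image Finset.univ cs.length ⟨1, Finset.mem_univ 1⟩
  refine ⟨w₀, ?_⟩
  intro u
  generalize hn : ℓ u = n
  induction n using Nat.strong_induction_on generalizing u with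
  | _ n ih =>
  by_cases h1 : u = 1
  · subst h1; rw [cs.length_one] at hn; simp [← hn]
  · obtain ⟨i, hdesc⟩ := cs.exists_rightDescent_of_ne_one h1
    have hlen : ℓ (u * σ i) + 1 = ℓ u := (cs.isRightDescent_iff).mp hdesc
    set u' := u * σ i with hu'
    have hu'u : u' * σ i = u := by rw [hu', cs.simple_mul_simple_cancel_right]
    have ihu' : ℓ (w₀ * u') + ℓ u' = ℓ w₀ := ih (ℓ u') (by omega) u' rfl
    rcases cs.length_mul_simple (w₀ * u') i with hup | hdown
    · exfalso
      set y := w₀ * u' with hy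
      obtain ⟨α, hαred, hαw⟩ := cs.exists_reduced_word' y
      obtain ⟨γ, hγred, hγw⟩ := cs.exists_reduced_word' u'⁻¹
      have hπαγ : π (α ++ γ) = w₀ := by
        rw [cs.wordProd_append, ← hαw, ← hγw, hy, mul_assoc, mul_inv_cancel, mul_one]
      have hy1 : ℓ y = α.length := by rw [hαw]; exact hαred
      have hy2 : ℓ u' = γ.length := by rw [← cs.length_inv, hγw]; exact hγred
      have hαγred : cs.IsReduced (α ++ γ) := by
        rw [IsReduced, hπαγ, List.length_append]
        omega
      have ht : cs.IsReflection (u' * σ i * u'⁻¹) := ⟨u', i, rfl⟩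
      have hlt : ℓ (π (α ++ γ) * (u' * σ i * u'⁻¹)) < ℓ (π (α ++ γ)) := by
        rw [hπαγ]
        exact lt_of_le_of_ne (hmax _ (Finset.mem_univ _)) (ht.length_mul_left_ne w₀)
      obtain ⟨k, hk, he⟩ := cs.strongExchange hαγred ht hlt
      rw [hπαγ] at he
      have hw₀t : w₀ * (u' * σ i * u'⁻¹) = y * σ i * u'⁻¹ := by
        have hw₀y : w₀ = y * u'⁻¹ := by rw [hy, mul_assoc, mul_inv_cancel, mul_one]
        rw [hw₀y]
        simp [mul_assoc]
      rw [hw₀t] at he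
      by_cases hcase : k < α.length
      · rw [List.eraseIdx_append_of_lt_length hcase] at he
        rw [cs.wordProd_append, ← hγw] at he
        have he2 : y * σ i = π (α.eraseIdx k) := mul_right_cancel he
        have hle : ℓ (y * σ i) ≤ α.length - 1 := by
          calc ℓ (y * σ i) ≤ (α.eraseIdx k).length := by
                rw [he2]; exact cs.length_wordProd_le _
            _ ≤ α.length - 1 := by rw [List.length_eraseIdx, if_pos hcase]
        omega
      · push_neg at hcase
        rw [List.eraseIdx_append_of_length_le hcase] at he
        rw [cs.wordProd_append, ← hαw] at he
        have he2 : σ i * u'⁻¹ = π (γ.eraseIdx (k - α.length)) := by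
          have h9 : y * (σ i * u'⁻¹) = y * π (γ.eraseIdx (k - α.length)) := by
            rw [← mul_assoc]; exact he
          exact mul_left_cancel h9
        have hkγ : k - α.length < γ.length := by
          rw [List.length_append] at hk; omega
        have hle : ℓ (σ i * u'⁻¹) ≤ γ.length - 1 := by
          calc ℓ (σ i * u'⁻¹) ≤ (γ.eraseIdx (k - α.length)).length := by
                rw [he2]; exact cs.length_wordProd_le _
            _ ≤ γ.length - 1 := by rw [List.length_eraseIdx, if_pos hkγ]
        have hlinv : ℓ (σ i * u'⁻¹) = ℓ u := by
          rw [← cs.length_inv, mul_inv_rev, inv_inv, cs.inv_simple, hu'u]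
        omega
    · rw [← hu'u, ← mul_assoc]
      omega


theorem descent_flip {w₀ : W} (hw₀ : ∀ u : W, ℓ (w₀ * u) + ℓ u = ℓ w₀) (w : W) (i : B) :
    cs.IsRightDescent (w₀ * w) i ↔ ¬ cs.IsRightDescent w i := by
  have h1 := hw₀ (w * σ i)
  have h2 := hw₀ w
  rw [← mul_assoc] at h1
  have h3 := cs.length_mul_simple_ne w i
  unfold IsRightDescent
  constructor
  · intro h
    omega
  · intro h
    omega

open Classical in
/-- Number of right descents. -/
noncomputable def desc [Fintype B] (w : W) : ℕ :=
  (Finset.univ.filter (fun i : B => cs.IsRightDescent w i)).card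

open Classical in
theorem desc_le [Fintype B] (w : W) : cs.desc w ≤ Fintype.card B := by
  unfold desc
  exact (Finset.card_filter_le _ _).trans_eq Finset.card_univ

open Classical in
theorem desc_mul_longest [Fintype B] {w₀ : W} (hw₀ : ∀ u : W, ℓ (w₀ * u) + ℓ u = ℓ w₀) (w : W) :
    cs.desc (w₀ * w) = Fintype.card B - cs.desc w := by
  unfold desc
  have h1 : Finset.univ.filter (fun i : B => cs.IsRightDescent (w₀ * w) i)
      = Finset.univ.filter (fun i : B => ¬ cs.IsRightDescent w i) := by
    apply Finset.filter_congr
    intro i _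
    exact cs.descent_flip hw₀ w i
  rw [h1, Finset.filter_not, Finset.card_sdiff_of_subset (Finset.filter_subset _ _), Finset.card_univ]

open Classical in
theorem card_desc_add_card_desc [Fintype B] (hW : Fintype W) (k₁ k₂ : ℕ)
    (hk : k₁ + k₂ = Fintype.card B + 1) :
    Fintype.card W ≤ (Finset.univ.filter (fun w : W => cs.desc w + k₁ ≤ Fintype.card B)).card
      + (Finset.univ.filter (fun w : W => cs.desc w + k₂ ≤ Fintype.card B)).card := by
  obtain ⟨w₀, hw₀⟩ := cs.exists_longest
  set m := Fintype.card B with hm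
  have hsplit := Finset.card_filter_add_card_filter_not
    (s := (Finset.univ : Finset W)) (p := fun w => cs.desc w + k₁ ≤ m)
  rw [Finset.card_univ] at hsplit
  have hinj : (Finset.univ.filter (fun w : W => ¬ (cs.desc w + k₁ ≤ m))).card
      ≤ (Finset.univ.filter (fun w : W => cs.desc w + k₂ ≤ m)).card := by
    apply Finset.card_le_card_of_injOn (fun w => w₀ * w)
    · intro w hw
      rw [Finset.mem_coe, Finset.mem_filter] at hw ⊢
      refine ⟨Finset.mem_univ _, ?_⟩
      rw [cs.desc_mul_longest hw₀ w]
      have hd : cs.desc w ≤ m := cs.desc_le w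
      omega
    · intro a _ b _ hab
      exact mul_left_cancel hab
  omega


/-! ### Coxeter codes -/

section Code

open Pointwise Module

variable [Fintype B]

/-- The order-`k` (by corank) Coxeter code. -/
noncomputable def natCode (k : ℕ) : Submodule (ZMod 2) (W → ZMod 2) :=
  Submodule.span (ZMod 2)
    {f | ∃ (a : W) (J : Finset B), J.card = k ∧
      f = Set.indicator (a • (Subgroup.closure (cs.simple '' ↑J) : Set W)) (fun _ => 1)}

/-- The dual code w.r.t. the standard bilinear form. -/
noncomputable def dualCode (U : Submodule (ZMod 2) (W → ZMod 2)) :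
    Submodule (ZMod 2) (W → ZMod 2) where
  carrier := {g | ∀ f ∈ U, ∑ x : W, f x * g x = 0}
  add_mem' := by
    intro a b ha hb f hf
    have h1 := ha f hf
    have h2 := hb f hf
    calc ∑ x : W, f x * (a + b) x = (∑ x : W, f x * a x) + ∑ x : W, f x * b x := by
          rw [← Finset.sum_add_distrib]
          apply Finset.sum_congr rfl
          intro x _
          simp [mul_add]
      _ = 0 := by rw [h1, h2, add_zero]
  zero_mem' := by
    intro f hf
    simp
  smul_mem' := by
    intro c g hg f hf
    have h1 := hg f hf
    calc ∑ x : W, f x * (c • g) x = c * ∑ x : W, f x * g x := by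
          rw [Finset.mul_sum]
          apply Finset.sum_congr rfl
          intro x _
          simp [Pi.smul_apply, smul_eq_mul]
          ring
      _ = 0 := by rw [h1, mul_zero]

theorem mem_dualCode {U : Submodule (ZMod 2) (W → ZMod 2)} {g : W → ZMod 2} :
    g ∈ dualCode U ↔ ∀ f ∈ U, ∑ x : W, f x * g x = 0 := Iff.rfl

open Classical in
private theorem even_card_cast_zero {n : ℕ} (h : 2 ∣ n) : (n : ZMod 2) = 0 := by
  obtain ⟨c, rfl⟩ := h
  push_cast
  rw [show ((2 : ZMod 2)) = 0 from rfl, zero_mul]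

open Classical in
theorem dot_indicator_coset {a b : W} {J K : Finset B}
    (h : Fintype.card B + 1 ≤ J.card + K.card) :
    ∑ x : W, (Set.indicator (a • (Subgroup.closure (cs.simple '' ↑J) : Set W)) (fun _ => (1 : ZMod 2))) x
      * (Set.indicator (b • (Subgroup.closure (cs.simple '' ↑K) : Set W)) (fun _ => (1 : ZMod 2))) x = 0 := by
  set P := Subgroup.closure (cs.simple '' (↑J : Set B)) with hP
  set Q := Subgroup.closure (cs.simple '' (↑K : Set B)) with hQ
  set A : Set W := a • (P : Set W) with hA
  set C : Set W := b • (Q : Set W) with hC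
  have hterm : ∀ x : W, (Set.indicator A (fun _ => (1 : ZMod 2))) x
      * (Set.indicator C (fun _ => (1 : ZMod 2))) x
      = if x ∈ A ∧ x ∈ C then 1 else 0 := by
    intro x
    by_cases h1 : x ∈ A <;> by_cases h2 : x ∈ C <;>
      simp [Set.indicator_apply, h1, h2]
  rw [Finset.sum_congr rfl (fun x _ => hterm x), Finset.sum_boole]
  -- the support is empty or a coset of P ⊓ Q
  by_cases hne : ∃ ρ : W, ρ ∈ A ∧ ρ ∈ C
  · obtain ⟨ρ, hρA, hρC⟩ := hne
    have hmemA : ∀ x : W, x ∈ A ↔ ρ⁻¹ * x ∈ P := by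
      intro x
      rw [hA, Set.mem_smul_set_iff_inv_smul_mem, smul_eq_mul]
      rw [hA, Set.mem_smul_set_iff_inv_smul_mem, smul_eq_mul] at hρA
      constructor
      · intro hx
        have : (a⁻¹ * ρ)⁻¹ * (a⁻¹ * x) ∈ P := mul_mem (inv_mem hρA) hx
        simpa [mul_assoc] using this
      · intro hx
        have : (a⁻¹ * ρ) * (ρ⁻¹ * x) ∈ P := mul_mem hρA hx
        simpa [mul_assoc] using this
    have hmemC : ∀ x : W, x ∈ C ↔ ρ⁻¹ * x ∈ Q := by
      intro x
      rw [hC, Set.mem_smul_set_iff_inv_smul_mem, smul_eq_mul]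
      rw [hC, Set.mem_smul_set_iff_inv_smul_mem, smul_eq_mul] at hρC
      constructor
      · intro hx
        have : (b⁻¹ * ρ)⁻¹ * (b⁻¹ * x) ∈ Q := mul_mem (inv_mem hρC) hx
        simpa [mul_assoc] using this
      · intro hx
        have : (b⁻¹ * ρ) * (ρ⁻¹ * x) ∈ Q := mul_mem hρC hx
        simpa [mul_assoc] using this
    have hcard : (Finset.univ.filter (fun x : W => x ∈ A ∧ x ∈ C)).card
        = (Finset.univ.filter (fun y : W => y ∈ (P ⊓ Q : Subgroup W))).card := by
      apply Finset.card_bij' (fun x _ => ρ⁻¹ * x) (fun y _ => ρ * y)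
      · intro x hx
        rw [Finset.mem_filter] at hx ⊢
        refine ⟨Finset.mem_univ _, ?_⟩
        rw [Subgroup.mem_inf]
        exact ⟨(hmemA x).mp hx.2.1, (hmemC x).mp hx.2.2⟩
      · intro y hy
        rw [Finset.mem_filter] at hy ⊢
        rw [Subgroup.mem_inf] at hy
        refine ⟨Finset.mem_univ _, ?_, ?_⟩
        · rw [hmemA]; simpa [mul_assoc] using hy.2.1
        · rw [hmemC]; simpa [mul_assoc] using hy.2.2
      · intro x _; simp [mul_assoc]
      · intro y _; simp [mul_assoc]
    rw [hcard]
    -- the subgroup P ⊓ Q has even cardinality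
    obtain ⟨i, hi⟩ : ∃ i, i ∈ J ∩ K := by
      have h1 := Finset.card_union_add_card_inter J K
      have h2 : (J ∪ K).card ≤ Fintype.card B := by
        exact (Finset.card_le_card (Finset.subset_univ _)).trans_eq Finset.card_univ
      have h3 : 0 < (J ∩ K).card := by omega
      exact Finset.card_pos.mp h3
    have hsi : cs.simple i ∈ (P ⊓ Q : Subgroup W) := by
      rw [Subgroup.mem_inf]
      constructor
      · exact Subgroup.subset_closure ⟨i, by simpa using (Finset.mem_inter.mp hi).1, rfl⟩
      · exact Subgroup.subset_closure ⟨i, by simpa using (Finset.mem_inter.mp hi).2, rfl⟩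
    have hfc : (Finset.univ.filter (fun y : W => y ∈ (P ⊓ Q : Subgroup W))).card
        = Fintype.card ↥(P ⊓ Q : Subgroup W) := (Fintype.card_subtype _).symm
    rw [hfc]
    apply even_card_cast_zero
    have hne1 : cs.simple i ≠ 1 := by
      intro hc
      have := cs.length_simple i
      rw [hc, cs.length_one] at this
      omega
    have horder : orderOf (⟨cs.simple i, hsi⟩ : ↥(P ⊓ Q : Subgroup W)) = 2 := by
      apply orderOf_eq_prime
      · apply Subtype.ext
        simpa using cs.simple_sq i
      · intro hc
        apply hne1
        exact congrArg Subtype.val hc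
    rw [← horder]
    exact orderOf_dvd_card
  · push_neg at hne
    have : Finset.univ.filter (fun x : W => x ∈ A ∧ x ∈ C) = ∅ := by
      apply Finset.filter_false_of_mem
      intro x _
      intro hc
      exact hne x hc.1 hc.2
    rw [this]
    simp

/-- Vectors orthogonal to a fixed `g` (pairing on the left). -/
noncomputable def leftOrtho (g : W → ZMod 2) : Submodule (ZMod 2) (W → ZMod 2) where
  carrier := {f | ∑ x : W, f x * g x = 0}
  add_mem' := by
    intro u v hu hv
    simp only [Set.mem_setOf_eq] at hu hv ⊢
    calc ∑ x : W, (u + v) x * g x = (∑ x : W, u x * g x) + ∑ x : W, v x * g x := by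
          rw [← Finset.sum_add_distrib]
          apply Finset.sum_congr rfl
          intro x _
          simp [add_mul]
      _ = 0 := by rw [hu, hv, add_zero]
  zero_mem' := by simp
  smul_mem' := by
    intro c u hu
    simp only [Set.mem_setOf_eq] at hu ⊢
    calc ∑ x : W, (c • u) x * g x = c * ∑ x : W, u x * g x := by
          rw [Finset.mul_sum]
          apply Finset.sum_congr rfl
          intro x _
          simp [Pi.smul_apply, smul_eq_mul, mul_assoc]
      _ = 0 := by rw [hu, mul_zero]

theorem natCode_le_dualCode {k₁ k₂ : ℕ} (hk : Fintype.card B + 1 ≤ k₁ + k₂) :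
    cs.natCode k₂ ≤ dualCode (cs.natCode k₁) := by
  rw [natCode, Submodule.span_le]
  rintro g ⟨b, K, hK, rfl⟩
  rw [SetLike.mem_coe, mem_dualCode]
  have hle : cs.natCode k₁ ≤ leftOrtho (Set.indicator
      (b • (Subgroup.closure (cs.simple '' ↑K) : Set W)) (fun _ => (1 : ZMod 2))) := by
    rw [natCode, Submodule.span_le]
    rintro f ⟨a, J, hJ, rfl⟩
    rw [SetLike.mem_coe]
    show ∑ x : W, _ = 0
    apply cs.dot_indicator_coset
    omega
  intro f hf
  exact hle hf

open Classical in
theorem card_le_finrank_natCode (k : ℕ) :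
    (Finset.univ.filter (fun w : W => cs.desc w + k ≤ Fintype.card B)).card
      ≤ finrank (ZMod 2) ↥(cs.natCode k) := by
  set m := Fintype.card B with hm
  set ι := {w : W // cs.desc w + k ≤ m} with hι
  -- choose for each w a suitable J
  have hJex : ∀ w : ι, ∃ J : Finset B, J.card = k ∧
      ∀ i ∈ J, ¬ cs.IsRightDescent w.val i := by
    intro w
    have hcard : k ≤ (Finset.univ.filter (fun i : B => ¬ cs.IsRightDescent w.val i)).card := by
      have h1 := Finset.card_filter_add_card_filter_not
        (s := (Finset.univ : Finset B)) (p := fun i => cs.IsRightDescent w.val i)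
      rw [Finset.card_univ] at h1
      have h2 := w.property
      have h3 : cs.desc w.val = (Finset.univ.filter
        (fun i : B => cs.IsRightDescent w.val i)).card := rfl
      omega
    obtain ⟨J, hJsub, hJcard⟩ := Finset.exists_subset_card_eq hcard
    refine ⟨J, hJcard, fun i hi => ?_⟩
    have := hJsub hi
    rw [Finset.mem_filter] at this
    exact this.2
  choose Jw hJwcard hJwnd using hJex
  set v : ι → (W → ZMod 2) := fun w =>
    Set.indicator (w.val • (Subgroup.closure (cs.simple '' ↑(Jw w)) : Set W)) (fun _ => 1) with hv
  have hvmem : ∀ w : ι, v w ∈ cs.natCode k := by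
    intro w
    apply Submodule.subset_span
    exact ⟨w.val, Jw w, hJwcard w, rfl⟩
  -- the key support fact
  have hsupp : ∀ (w : ι) (x : W), x ∈ w.val • (Subgroup.closure (cs.simple '' ↑(Jw w)) : Set W) →
      ℓ w.val ≤ ℓ x ∧ (ℓ x = ℓ w.val → x = w.val) := by
    intro w x hx
    rw [Set.mem_smul_set_iff_inv_smul_mem, smul_eq_mul] at hx
    have hmul := cs.length_mul_of_noDescent (X := ↑(Jw w)) (w := w.val)
      (fun i hi => hJwnd w i hi) _ hx
    rw [mul_inv_cancel_left] at hmul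
    constructor
    · omega
    · intro hlen
      have h0 : ℓ (w.val⁻¹ * x) = 0 := by omega
      have h1 : w.val⁻¹ * x = 1 := cs.length_eq_zero_iff.mp h0
      have := congrArg (w.val * ·) h1
      simpa [mul_assoc] using this
  have hmemself : ∀ w : ι, w.val ∈ w.val •
      (Subgroup.closure (cs.simple '' ↑(Jw w)) : Set W) := by
    intro w
    rw [Set.mem_smul_set_iff_inv_smul_mem, smul_eq_mul, inv_mul_cancel]
    exact one_mem _
  have hind : LinearIndependent (ZMod 2) v := by
    rw [linearIndependent_iff']
    intro s g hsum j hjs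
    by_contra hgj
    set T := s.filter (fun i => g i ≠ 0) with hT
    have hTne : T.Nonempty := ⟨j, by rw [hT, Finset.mem_filter]; exact ⟨hjs, hgj⟩⟩
    obtain ⟨i₀, hi₀T, hi₀min⟩ := Finset.exists_min_image T (fun i => ℓ i.val) hTne
    rw [hT, Finset.mem_filter] at hi₀T
    have heval := congrFun hsum i₀.val
    rw [Finset.sum_apply] at heval
    have hterm : ∀ i ∈ s, (g i • v i) i₀.val = if i = i₀ then g i₀ else 0 := by
      intro i his
      by_cases hgi : g i = 0
      · by_cases hii : i = i₀
        · rw [hii] at hgi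
          exact absurd hgi hi₀T.2
        · simp [hgi, hii]
      · by_cases hx : i₀.val ∈ i.val • (Subgroup.closure (cs.simple '' ↑(Jw i)) : Set W)
        · have hii : i = i₀ := by
            have h1 := hsupp i i₀.val hx
            have h2 : ℓ i₀.val ≤ ℓ i.val :=
              hi₀min i (by rw [hT, Finset.mem_filter]; exact ⟨his, hgi⟩)
            have h3 : i₀.val = i.val := h1.2 (by omega)
            exact Subtype.ext h3.symm
          rw [hii, if_pos rfl]
          have : v i₀ i₀.val = 1 := by
            rw [hv]
            simp [Set.indicator_apply, hmemself i₀]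
          rw [Pi.smul_apply, this, smul_eq_mul, mul_one]
        · have hii : i ≠ i₀ := by
            intro hc
            apply hx
            rw [hc]
            exact hmemself i₀
          rw [if_neg hii]
          have : v i i₀.val = 0 := by
            rw [hv]
            simp [Set.indicator_apply, hx]
          rw [Pi.smul_apply, this, smul_eq_mul, mul_zero]
    rw [Finset.sum_congr rfl hterm, Finset.sum_ite_eq' s i₀ (fun _ => g i₀)] at heval
    rw [if_pos hi₀T.1] at heval
    exact hi₀T.2 heval
  -- transfer to the submodule
  set v' : ι → ↥(cs.natCode k) := fun w => ⟨v w, hvmem w⟩ with hv'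
  have hind' : LinearIndependent (ZMod 2) v' := by
    apply LinearIndependent.of_comp (cs.natCode k).subtype
    exact hind
  have hcard := hind'.fintype_card_le_finrank
  rw [Fintype.card_subtype] at hcard
  exact hcard

open Classical in
theorem finrank_add_finrank_dualCode (U : Submodule (ZMod 2) (W → ZMod 2)) :
    finrank (ZMod 2) ↥U + finrank (ZMod 2) ↥(dualCode U : Submodule (ZMod 2) (W → ZMod 2))
      = Fintype.card W := by
  set bW := Pi.basisFun (ZMod 2) W with hbW
  set Φ := bW.toDualEquiv with hΦ
  have hkey : ∀ g f : W → ZMod 2, Φ g f = ∑ x : W, g x * f x := by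
    intro g
    have hmaps : (Φ g : Module.Dual (ZMod 2) (W → ZMod 2))
        = (∑ x : W, g x • LinearMap.proj x) := by
      apply bW.ext
      intro x
      have h1 : (Φ (g : W → ZMod 2)) (bW x) = g x := by
        rw [hΦ]
        show bW.toDual g (bW x) = g x
        rw [Basis.toDual_eq_repr]
        simp [hbW, Pi.basisFun_repr]
      rw [h1, LinearMap.sum_apply]
      have h2 : ∀ y : W, (g y • (LinearMap.proj y :
          (W → ZMod 2) →ₗ[ZMod 2] ZMod 2)) (bW x) = if x = y then g y else 0 := by
        intro y
        rw [LinearMap.smul_apply, LinearMap.proj_apply, hbW, Pi.basisFun_apply]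
        by_cases h : x = y
        · subst h; simp
        · simp [Pi.single_apply, h, Ne.symm h]
      rw [Finset.sum_congr rfl (fun y _ => h2 y), Finset.sum_ite_eq Finset.univ x (fun y => g y)]
      simp
    intro f
    rw [hmaps, LinearMap.sum_apply]
    apply Finset.sum_congr rfl
    intro x _
    simp [LinearMap.proj_apply]
  have hcomap : (dualCode U : Submodule (ZMod 2) (W → ZMod 2))
      = Submodule.comap (Φ : (W → ZMod 2) →ₗ[ZMod 2] Module.Dual (ZMod 2) (W → ZMod 2))
          (Submodule.dualAnnihilator U) := by
    apply _root_.le_antisymm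
    · intro g hg
      rw [Submodule.mem_comap, Submodule.mem_dualAnnihilator]
      intro f hf
      simp only [LinearEquiv.coe_coe]
      rw [hkey]
      rw [mem_dualCode] at hg
      rw [← hg f hf]
      apply Finset.sum_congr rfl
      intro x _
      ring
    · intro g hg
      rw [Submodule.mem_comap, Submodule.mem_dualAnnihilator] at hg
      simp only [LinearEquiv.coe_coe] at hg
      rw [mem_dualCode]
      intro f hf
      rw [← hg f hf, hkey]
      apply Finset.sum_congr rfl
      intro x _
      ring
  rw [hcomap, Submodule.comap_equiv_eq_map_symm]
  rw [LinearEquiv.finrank_map_eq Φ.symm (Submodule.dualAnnihilator U)]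
  have h3 := Submodule.finrank_quotient_add_finrank U
  have h4 : finrank (ZMod 2) ((W → ZMod 2) ⧸ U)
      = finrank (ZMod 2) ↥(Submodule.dualAnnihilator U) :=
    LinearEquiv.finrank_eq (Subspace.quotEquivAnnihilator U)
  have h5 : finrank (ZMod 2) (W → ZMod 2) = Fintype.card W :=
    Module.finrank_fintype_fun_eq_card _
  omega

/-- The central duality theorem for Coxeter codes, natural-number indexed. -/
theorem dualCode_natCode {k₁ k₂ : ℕ} (hk : k₁ + k₂ = Fintype.card B + 1) :
    dualCode (cs.natCode k₁) = cs.natCode k₂ := by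
  classical
  set m := Fintype.card B with hm
  have hle : cs.natCode k₂ ≤ dualCode (cs.natCode k₁) :=
    cs.natCode_le_dualCode (by omega)
  have hN := cs.card_desc_add_card_desc inferInstance k₁ k₂ hk
  have hd₁ := cs.card_le_finrank_natCode k₁
  have hd₂ := cs.card_le_finrank_natCode k₂
  have hdual := finrank_add_finrank_dualCode (W := W) (cs.natCode k₁)
  have hdual₂ := finrank_add_finrank_dualCode (W := W) (cs.natCode k₂)
  have hfin : finrank (ZMod 2) ↥(dualCode (cs.natCode k₁))
      ≤ finrank (ZMod 2) ↥(cs.natCode k₂) := by omega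
  exact (Submodule.eq_of_le_of_finrank_le hle hfin).symm

end Code

end Finite

end CoxeterSystem

theorem coxeterCode_eq_natCode {B W : Type*} [Fintype B] [Group W] [Fintype W]
    {M : CoxeterMatrix B} (cs : CoxeterSystem M W) (r : ℤ)
    (hr : r ≤ (Fintype.card B : ℤ)) :
    coxeterCode cs r = cs.natCode ((Fintype.card B : ℤ) - r).toNat := by
  unfold coxeterCode CoxeterSystem.natCode
  congr 1
  ext f
  constructor
  · rintro ⟨a, J, hJ, rfl⟩
    exact ⟨a, J, by omega, rfl⟩
  · rintro ⟨a, J, hJ, rfl⟩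
    exact ⟨a, J, by omega, rfl⟩


/-- duality: `C_W(r)^⊥ = C_W(m−r−1)` with respect to the standard
bilinear form `f·g = ∑ x, f x * g x` on `F₂^W`. -/
theorem coxeterCode_dual {B W : Type*} [Fintype B] [Group W] [Fintype W]
    {M : CoxeterMatrix B} (cs : CoxeterSystem M W) (r : ℤ)
    (h₁ : -1 ≤ r) (h₂ : r ≤ (Fintype.card B : ℤ)) :
    ∀ g : W → ZMod 2,
      (∀ f ∈ coxeterCode cs r, ∑ x : W, f x * g x = 0) ↔
        g ∈ coxeterCode cs ((Fintype.card B : ℤ) - r - 1) := by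
  intro g
  rw [coxeterCode_eq_natCode cs r h₂,
    coxeterCode_eq_natCode cs ((Fintype.card B : ℤ) - r - 1) (by omega)]
  have hk : ((Fintype.card B : ℤ) - r).toNat
      + ((Fintype.card B : ℤ) - ((Fintype.card B : ℤ) - r - 1)).toNat
      = Fintype.card B + 1 := by omega
  have hdual := cs.dualCode_natCode hk
  rw [← hdual]
  exact Iff.rfl
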